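/- Let n > 1 and let P₀, Q₀, P, Q be nonzero column vectors in ℝⁿ with Q₀ᵀP₀ = QᵀP ≠ 0. Then there exists an invertible n×n real matrix M with positive determinant such that M⁻¹P₀ = P and MᵀQ₀ = Q. -/

import Mathlib

open Matrix

lemma aux_canonical {n : ℕ} [NeZero n] (w v : Fin n → ℝ) (h : w ⬝ᵥ v = 1) :
    ∃ E : Matrix (Fin n) (Fin n) ℝ, IsUnit E.det ∧ E *ᵥ v = Pi.single 0 1 ∧ E 0 = w := by
  classical
  -- the linear functional x ↦ w ⬝ᵥ x
  let f : (Fin n → ℝ) →ₗ[ℝ] ℝ := ∑ i, w i • LinearMap.proj i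
  have hf : ∀ x, f x = w ⬝ᵥ x := by
    intro x
    simp [f, dotProduct, smul_eq_mul]
  have hfv : f v = 1 := by rw [hf]; exact h
  -- the coordinate functional
  let g : (Fin n → ℝ) →ₗ[ℝ] ℝ := LinearMap.proj 0
  have hrangef : LinearMap.range f = ⊤ :=
    LinearMap.range_eq_top.2 fun r => ⟨r • v, by simp [hfv]⟩
  have hrangeg : LinearMap.range g = ⊤ :=
    LinearMap.range_eq_top.2 fun r => ⟨fun _ => r, rfl⟩
  have hfin : Module.finrank ℝ (LinearMap.ker f) = Module.finrank ℝ (LinearMap.ker g) := by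
    have h1 := LinearMap.finrank_range_add_finrank_ker f
    have h2 := LinearMap.finrank_range_add_finrank_ker g
    rw [hrangef, finrank_top] at h1
    rw [hrangeg, finrank_top] at h2
    omega
  obtain ⟨φ⟩ : Nonempty (LinearMap.ker f ≃ₗ[ℝ] LinearMap.ker g) := ⟨LinearEquiv.ofFinrankEq _ _ hfin⟩
  let π : (Fin n → ℝ) →ₗ[ℝ] LinearMap.ker f :=
    LinearMap.codRestrict (LinearMap.ker f) (LinearMap.id - f.smulRight v) (fun x => by
      simp [LinearMap.mem_ker, map_sub, _root_.map_smul, hfv, smul_eq_mul])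
  let eL : (Fin n → ℝ) →ₗ[ℝ] (Fin n → ℝ) :=
    f.smulRight (Pi.single 0 1) + (LinearMap.ker g).subtype ∘ₗ φ.toLinearMap ∘ₗ π
  have hπ : ∀ x, (π x : Fin n → ℝ) = x - f x • v := fun x => rfl
  have hcoord : ∀ x, eL x 0 = f x := by
    intro x
    have hk' : (φ (π x) : Fin n → ℝ) 0 = 0 := (φ (π x)).2
    simp [eL, hk', Pi.single_apply]
  have heLv : eL v = Pi.single 0 1 := by
    have : π v = 0 := by
      apply Subtype.ext
      simp [hπ, hfv]
    simp [eL, this, hfv]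
  have hinj : Function.Injective eL := by
    rw [← LinearMap.ker_eq_bot]
    rw [LinearMap.ker_eq_bot']
    intro x hx
    have hfx : f x = 0 := by rw [← hcoord x, hx]; rfl
    have : ((LinearMap.ker g).subtype ∘ₗ φ.toLinearMap ∘ₗ π) x = 0 := by
      have := hx
      simp only [eL, LinearMap.add_apply, LinearMap.smulRight_apply, hfx, zero_smul,
        zero_add] at this ⊢
      exact this
    have hφ : φ (π x) = 0 := by
      apply Subtype.ext
      exact this
    have hπx : π x = 0 := φ.injective (by simp [hφ])
    have := congrArg (Subtype.val) hπx
    rw [hπ] at this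
    simpa [hfx] using this
  have hbij : Function.Bijective eL := ⟨hinj, LinearMap.injective_iff_surjective.mp hinj⟩
  let e := LinearEquiv.ofBijective eL hbij
  refine ⟨LinearMap.toMatrix' eL, ?_, ?_, ?_⟩
  · have : (LinearMap.toMatrix' eL).det = LinearMap.det eL := LinearMap.det_toMatrix' eL
    rw [this]
    have : LinearMap.det eL = LinearMap.det (e : (Fin n → ℝ) →ₗ[ℝ] (Fin n → ℝ)) := rfl
    rw [this]
    exact e.isUnit_det'
  · rw [← Matrix.toLin'_apply, Matrix.toLin'_toMatrix']
    exact heLv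
  · funext j
    rw [LinearMap.toMatrix'_apply]
    rw [hcoord]
    rw [hf]
    simp [dotProduct, Pi.single_apply]
open Matrix in
theorem exists_posdet_matrix_solving_system {n : ℕ} (hn : 1 < n)
    (P₀ Q₀ P Q : Matrix (Fin n) (Fin 1) ℝ)
    (hP₀ : P₀ ≠ 0) (hQ₀ : Q₀ ≠ 0) (hP : P ≠ 0) (hQ : Q ≠ 0)
    (heq : Q₀ᵀ * P₀ = Qᵀ * P) (hne : Q₀ᵀ * P₀ ≠ 0) :
    ∃ M : Matrix (Fin n) (Fin n) ℝ, 0 < M.det ∧ M⁻¹ * P₀ = P ∧ Mᵀ * Q₀ = Q := by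
  classical
  haveI : NeZero n := ⟨by omega⟩
  set p₀ : Fin n → ℝ := fun i => P₀ i 0 with hp₀
  set q₀ : Fin n → ℝ := fun i => Q₀ i 0 with hq₀
  set p : Fin n → ℝ := fun i => P i 0 with hp
  set q : Fin n → ℝ := fun i => Q i 0 with hq
  set c : ℝ := q₀ ⬝ᵥ p₀ with hc
  have hent : ∀ (A B : Matrix (Fin n) (Fin 1) ℝ),
      (Aᵀ * B) 0 0 = (fun i => A i 0) ⬝ᵥ (fun i => B i 0) := by
    intro A B
    simp [Matrix.mul_apply, dotProduct]
  have hcne : c ≠ 0 := by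
    intro h0
    apply hne
    ext i j
    fin_cases i; fin_cases j
    show (Q₀ᵀ * P₀) 0 0 = (0 : Matrix (Fin 1) (Fin 1) ℝ) 0 0
    rw [hent]
    simpa using h0
  have hqp : q ⬝ᵥ p = c := by
    rw [hc, ← hent Q₀ P₀, ← hent Q P, heq]
  obtain ⟨E₀, hE₀det, hE₀v, hE₀row⟩ := aux_canonical (c⁻¹ • q₀) p₀
    (by rw [smul_dotProduct, ← hc, smul_eq_mul, inv_mul_cancel₀ hcne])
  obtain ⟨E, hEdet, hEv, hErow⟩ := aux_canonical (c⁻¹ • q) p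
    (by rw [smul_dotProduct, hqp, smul_eq_mul, inv_mul_cancel₀ hcne])
  set i1 : Fin n := ⟨1, hn⟩ with hi1
  have h01 : (0 : Fin n) ≠ i1 := by
    simp [hi1, Fin.ext_iff]
  set t : ℝ := (E₀.det)⁻¹ * E.det with ht
  have htne : t ≠ 0 := by
    apply mul_ne_zero
    · exact inv_ne_zero hE₀det.ne_zero
    · exact hEdet.ne_zero
  set d : ℝ := if 0 < t then 1 else -1 with hd
  set D : Matrix (Fin n) (Fin n) ℝ := Matrix.diagonal (fun i => if i = i1 then d else 1)
    with hD
  have hDdet : D.det = d := by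
    rw [hD, Matrix.det_diagonal]
    rw [Finset.prod_ite_eq' Finset.univ i1 (fun _ => d)]
    simp
  have hDmv : D *ᵥ (Pi.single 0 1 : Fin n → ℝ) = Pi.single 0 1 := by
    rw [hD, Matrix.diagonal_mulVec_single]
    simp [if_neg h01]
  have hDvm : (Pi.single 0 1 : Fin n → ℝ) ᵥ* D = Pi.single 0 1 := by
    rw [hD, Matrix.single_vecMul_diagonal]
    simp [if_neg h01]
  set M : Matrix (Fin n) (Fin n) ℝ := E₀⁻¹ * (D * E) with hM
  have hMdet : M.det = (E₀.det)⁻¹ * (d * E.det) := by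
    rw [hM, Matrix.det_mul, Matrix.det_mul, Matrix.det_nonsing_inv, hDdet, Ring.inverse_eq_inv]
  have hMpos : 0 < M.det := by
    rw [hMdet]
    by_cases hpos : 0 < t
    · rw [hd, if_pos hpos, one_mul]
      rw [ht] at hpos
      exact hpos
    · rw [hd, if_neg hpos]
      have hlt : t < 0 := lt_of_le_of_ne (not_lt.mp hpos) htne
      rw [ht] at hlt
      nlinarith
  have hMudet : IsUnit M.det := isUnit_iff_ne_zero.mpr hMpos.ne'
  -- M *ᵥ p = p₀
  have hMv : M *ᵥ p = p₀ := by
    have h1 : E₀⁻¹ *ᵥ (Pi.single 0 1 : Fin n → ℝ) = p₀ := by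
      rw [← hE₀v, Matrix.mulVec_mulVec, Matrix.nonsing_inv_mul E₀ hE₀det, Matrix.one_mulVec]
    calc M *ᵥ p = E₀⁻¹ *ᵥ (D *ᵥ (E *ᵥ p)) := by
          rw [hM, Matrix.mulVec_mulVec, Matrix.mulVec_mulVec, Matrix.mul_assoc]
      _ = p₀ := by rw [hEv, hDmv, h1]
  -- q₀ ᵥ* M = q
  have hMq : q₀ ᵥ* M = q := by
    have hq₀eq : q₀ = (c • (Pi.single 0 1 : Fin n → ℝ)) ᵥ* E₀ := by
      rw [Matrix.smul_vecMul, Matrix.single_one_vecMul, Matrix.row, hE₀row, smul_smul,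
        mul_inv_cancel₀ hcne, one_smul]
    rw [hq₀eq, Matrix.vecMul_vecMul, hM, ← Matrix.mul_assoc,
      Matrix.mul_nonsing_inv E₀ hE₀det, Matrix.one_mul, ← Matrix.vecMul_vecMul,
      Matrix.smul_vecMul, hDvm, Matrix.smul_vecMul,
      Matrix.single_one_vecMul, Matrix.row, hErow, smul_smul, mul_inv_cancel₀ hcne, one_smul]
  refine ⟨M, hMpos, ?_, ?_⟩
  · have hMP : M * P = P₀ := by
      ext i j
      obtain rfl : j = 0 := Subsingleton.elim _ _
      have h2 := congrFun hMv i
      simpa [Matrix.mul_apply, Matrix.mulVec, dotProduct, hp, hp₀] using h2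
    rw [← hMP, ← Matrix.mul_assoc, Matrix.nonsing_inv_mul M hMudet, Matrix.one_mul]
  · ext i j
    obtain rfl : j = 0 := Subsingleton.elim _ _
    have h2 := congrFun hMq i
    simpa [Matrix.mul_apply, Matrix.vecMul, dotProduct, hq₀, hq, mul_comm] using h2
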